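/- Let (p_i)_{i=1}^{2^d−1} be a probability distribution (nonnegative reals summing to 1) with d ≥ 2. Then Σ_i p_i(1−p_i)^{d−1} ≤ ((2^d−2)/(2^d−1))^{d−1}. -/

import Mathlib

open Finset

lemma aux_taylor (m : ℕ) (a b : ℝ) (ha0 : 0 ≤ a) (ha1 : a ≤ 1) (hb0 : 0 ≤ b) (hb1 : b ≤ 1) :
    b ^ (m+1) ≤ a ^ (m+1) + (m+1) * a ^ m * (b - a) + ((m+1) * m / 2 : ℝ) * (b - a)^2 := by
  induction m with
  | zero => simp
  | succ m ih =>
      have hpow : a ^ m ≤ 1 := pow_le_one₀ ha0 ha1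
      have h2 : b * b ^ (m+1) ≤
          b * (a ^ (m+1) + (m+1) * a ^ m * (b - a) + ((m+1) * m / 2 : ℝ) * (b - a)^2) :=
        mul_le_mul_of_nonneg_left ih hb0
      have h3 : 0 ≤ (b - a)^2 * (1 - a ^ m) := mul_nonneg (sq_nonneg _) (by linarith)
      have h4 : 0 ≤ (b - a)^2 * (1 - b) := mul_nonneg (sq_nonneg _) (by linarith)
      have h5 : 0 ≤ ((m:ℝ)+1) * ((b - a)^2 * (1 - a ^ m) + ((m:ℝ)/2) * ((b - a)^2 * (1 - b))) :=
        mul_nonneg (by positivity) (add_nonneg h3 (mul_nonneg (by positivity) h4))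
      have e : a ^ (m+1+1) + (((m:ℝ)+1)+1) * a ^ (m+1) * (b - a)
            + ((((m:ℝ)+1)+1) * ((m:ℝ)+1) / 2) * (b - a)^2
            - b * (a ^ (m+1) + ((m:ℝ)+1) * a ^ m * (b - a) + (((m:ℝ)+1) * (m:ℝ) / 2) * (b - a)^2)
          = ((m:ℝ)+1) * ((b - a)^2 * (1 - a ^ m) + ((m:ℝ)/2) * ((b - a)^2 * (1 - b))) := by
        ring
      have hb : b ^ (m+1+1) = b * b ^ (m+1) := by ring
      push_cast
      push_cast at h2
      linarith [h2, h5, e]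

lemma aux_pointwise (m : ℕ) (c x : ℝ) (hc : 0 < c) (hc1 : ((m:ℝ)+2) * c ≤ 1)
    (h2 : ((m:ℝ) * ((m:ℝ)+3) + 2) * c ≤ 2) (hx0 : 0 ≤ x) (hx1 : x ≤ 1) :
    x * (1-x) ^ (m+1) ≤ (1-c) ^ m * (c*(1-c) + (1 - ((m:ℝ)+2)*c) * (x - c)) := by
  have hcm : 0 ≤ (m:ℝ) := Nat.cast_nonneg m
  have hc12 : c ≤ 1/2 := by nlinarith
  have hs0 : (0:ℝ) ≤ 1 - c := by linarith
  have hs1 : (1:ℝ) - c ≤ 1 := by linarith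
  have hbern : 1 - (m:ℝ)*c ≤ (1-c)^m := by
    have := one_add_mul_le_pow (a := -c) (by linarith) m
    calc 1 - (m:ℝ)*c = 1 + (m:ℝ)*(-c) := by ring
      _ ≤ (1 + -c)^m := this
      _ = (1-c)^m := by ring_nf
  rcases le_total x (((m:ℝ)+1)*c) with hcase | hcase
  · -- x small case, use Taylor
    have hT := aux_taylor m (1-c) (1-x) hs0 hs1 (by linarith) (by linarith)
    have hxs : x * ((m:ℝ)/2) ≤ (1-c)^m := by nlinarith
    have e2 : x * (1-x)^(m+1) ≤
        x * ((1-c)^(m+1) + ((m:ℝ)+1)*(1-c)^m*((1-x)-(1-c)) + (((m:ℝ)+1)*(m:ℝ)/2)*((1-x)-(1-c))^2) := by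
      have := mul_le_mul_of_nonneg_left hT hx0
      push_cast at this ⊢
      linarith
    have h5 : 0 ≤ ((m:ℝ)+1) * (c-x)^2 * ((1-c)^m - x * ((m:ℝ)/2)) :=
      mul_nonneg (mul_nonneg (by positivity) (sq_nonneg _)) (by linarith)
    have e1 : (1-c)^m * (c*(1-c) + (1 - ((m:ℝ)+2)*c) * (x - c))
        - x * ((1-c)^(m+1) + ((m:ℝ)+1)*(1-c)^m*((1-x)-(1-c)) + (((m:ℝ)+1)*(m:ℝ)/2)*((1-x)-(1-c))^2)
        = ((m:ℝ)+1) * (c-x)^2 * ((1-c)^m - x * ((m:ℝ)/2)) := by ring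
    linarith
  · -- x ≥ (m+1)c case
    have hxc : c ≤ x := by nlinarith
    have hpl : (1-x)^m ≤ (1-c)^m := pow_le_pow_left₀ (by linarith) (by linarith) m
    have h1 : x * (1-x)^(m+1) ≤ (1-c)^m * (x*(1-x)) := by
      have : (1-x)^(m+1) = (1-x)^m * (1-x) := by ring
      rw [this]
      have h1x : 0 ≤ 1 - x := by linarith
      calc x * ((1-x)^m * (1-x)) = (x*(1-x)) * (1-x)^m := by ring
        _ ≤ (x*(1-x)) * (1-c)^m := mul_le_mul_of_nonneg_left hpl (mul_nonneg hx0 h1x)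
        _ = (1-c)^m * (x*(1-x)) := by ring
    have h2' : x*(1-x) ≤ c*(1-c) + (1 - ((m:ℝ)+2)*c) * (x - c) := by
      have e : c*(1-c) + (1 - ((m:ℝ)+2)*c) * (x - c) - x*(1-x) = (x - c)*(x - ((m:ℝ)+1)*c) := by
        ring
      nlinarith [mul_nonneg (sub_nonneg.2 hxc) (sub_nonneg.2 hcase)]
    have hsp : (0:ℝ) ≤ (1-c)^m := by positivity
    nlinarith [mul_le_mul_of_nonneg_left h2' hsp]

lemma aux_nat : ∀ m : ℕ, m*(m+3)+4 ≤ 2^(m+3) := by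
  intro m
  induction m with
  | zero => norm_num
  | succ m ih =>
      have h := Nat.lt_two_pow_self (n := m+2)
      have : 2*m+4 ≤ 2^(m+3) := by
        calc 2*m+4 = 2*(m+2) := by ring
          _ ≤ 2*2^(m+2) := by omega
          _ = 2^(m+3) := by ring
      calc (m+1)*(m+1+3)+4 = (m*(m+3)+4) + (2*m+4) := by ring
        _ ≤ 2^(m+3) + 2^(m+3) := by omega
        _ = 2^(m+3+1) := by ring

theorem stmt5 (d : ℕ) (hd : 2 ≤ d) (p : Fin (2 ^ d - 1) → ℝ)
    (hpos : ∀ i, 0 ≤ p i) (hsum : ∑ i, p i = 1) :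
    ∑ i, p i * (1 - p i) ^ (d - 1) ≤
      (((2 : ℝ) ^ d - 2) / ((2 : ℝ) ^ d - 1)) ^ (d - 1) := by
  obtain ⟨m, rfl⟩ : ∃ m, d = m + 2 := ⟨d - 2, by omega⟩
  have h2N : (4:ℕ) ≤ 2^(m+2) := by
    calc (4:ℕ) = 2^2 := by norm_num
      _ ≤ 2^(m+2) := Nat.pow_le_pow_right (by norm_num) (by omega)
  have h2NR : (4:ℝ) ≤ 2^(m+2) := by exact_mod_cast h2N
  have hNR : ((2^(m+2) - 1 : ℕ):ℝ) = 2^(m+2) - 1 := by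
    have h1 : (1:ℕ) ≤ 2^(m+2) := by omega
    push_cast [h1]
    ring
  have hNpos : (0:ℝ) < ((2^(m+2) - 1 : ℕ):ℝ) := by rw [hNR]; linarith
  set c : ℝ := 1 / ((2^(m+2) - 1 : ℕ):ℝ) with hc_def
  have hc : 0 < c := by rw [hc_def]; positivity
  have hNc : ((2^(m+2) - 1 : ℕ):ℝ) * c = 1 := by
    rw [hc_def]; exact mul_one_div_cancel (ne_of_gt hNpos)
  have hdlt : m + 2 < 2^(m+2) := Nat.lt_two_pow_self
  have hc1 : ((m:ℝ)+2) * c ≤ 1 := by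
    have h' : ((m:ℝ)+2) ≤ ((2^(m+2) - 1 : ℕ):ℝ) := by
      rw [hNR]
      have : ((m:ℝ)+2) + 1 ≤ 2^(m+2) := by exact_mod_cast hdlt
      linarith
    calc ((m:ℝ)+2) * c ≤ ((2^(m+2) - 1 : ℕ):ℝ) * c :=
          mul_le_mul_of_nonneg_right h' (le_of_lt hc)
      _ = 1 := hNc
  have h2 : ((m:ℝ) * ((m:ℝ)+3) + 2) * c ≤ 2 := by
    have hn : m*(m+3)+2 ≤ 2*(2^(m+2) - 1) := by
      have h1 := aux_nat m
      have hp : (2:ℕ)^(m+3) = 2*2^(m+2) := by ring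
      omega
    have h' : ((m:ℝ) * ((m:ℝ)+3) + 2) ≤ 2 * ((2^(m+2) - 1 : ℕ):ℝ) := by exact_mod_cast hn
    calc ((m:ℝ) * ((m:ℝ)+3) + 2) * c ≤ (2*((2^(m+2) - 1 : ℕ):ℝ)) * c :=
          mul_le_mul_of_nonneg_right h' (le_of_lt hc)
      _ = 2 := by rw [mul_assoc, hNc]; norm_num
  have hple : ∀ i, p i ≤ 1 := by
    intro i
    rw [← hsum]
    exact Finset.single_le_sum (fun j _ => hpos j) (mem_univ i)
  have key : ∀ i, p i * (1 - p i) ^ (m+1) ≤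
      (1-c) ^ m * (c*(1-c) + (1 - ((m:ℝ)+2)*c) * (p i - c)) :=
    fun i => aux_pointwise m c (p i) hc hc1 h2 (hpos i) (hple i)
  have hcard : (Finset.univ : Finset (Fin (2^(m+2) - 1))).card = 2^(m+2) - 1 := by
    simp
  have hsum2 : ∑ i, ((1-c) ^ m * (c*(1-c) + (1 - ((m:ℝ)+2)*c) * (p i - c))) = (1-c)^(m+1) := by
    rw [← Finset.mul_sum]
    have e2 : ∑ i, (p i - c) = 0 := by
      rw [Finset.sum_sub_distrib, hsum, Finset.sum_const, hcard, nsmul_eq_mul, hNc]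
      ring
    have e1 : ∑ i, (c*(1-c) + (1 - ((m:ℝ)+2)*c) * (p i - c))
        = ((2^(m+2) - 1 : ℕ):ℝ) * (c*(1-c)) + (1 - ((m:ℝ)+2)*c) * (∑ i, (p i - c)) := by
      rw [Finset.sum_add_distrib, Finset.sum_const, hcard, ← Finset.mul_sum, nsmul_eq_mul]
    rw [e1, e2]
    have e3 : ((2^(m+2) - 1 : ℕ):ℝ) * (c*(1-c)) = (1-c) := by
      rw [← mul_assoc, hNc]; ring
    rw [e3]
    ring
  have hstep : ∑ i, p i * (1 - p i) ^ (m+1) ≤ (1-c)^(m+1) := by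
    rw [← hsum2]
    exact Finset.sum_le_sum (fun i _ => key i)
  have hd1 : m + 2 - 1 = m + 1 := by omega
  rw [hd1]
  have hne : ((2:ℝ)^(m+2) - 1) ≠ 0 := by linarith
  have hfin : (1:ℝ) - c = ((2:ℝ)^(m+2) - 2) / ((2:ℝ)^(m+2) - 1) := by
    rw [hc_def, hNR]
    field_simp
    ring
  calc ∑ i, p i * (1 - p i) ^ (m+1) ≤ (1-c)^(m+1) := hstep
    _ = (((2:ℝ)^(m+2) - 2) / ((2:ℝ)^(m+2) - 1)) ^ (m+1) := by rw [hfin]
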